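/- Let V be a finite-dimensional real normed vector space and C ⊆ V a nonempty open properly convex cone. Let x, z ∈ C with x − z ∉ closure(C) ∪ (−closure(C)), let s ∈ (0,1), and put y := (1−s)•z + s•x (so y ∈ C, and x − y, y − z also lie outside closure(C) ∪ (−closure(C))). Then the domain shape distance is additive along this projective line segment: d(x,y) + d(y,z) = d(x,z). -/

import Mathlib

open Pointwise

/-- The supremum `u*` of the set of parameters `u` for which the affine combination
`(1-u) • y + u • x` stays in the cone `C`. -/
noncomputable def ustar {V : Type*} [NormedAddCommGroup V] [NormedSpace ℝ V]
    (C : Set V) (x y : V) : ℝ :=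
  sSup {u : ℝ | (1 - u) • y + u • x ∈ C}

/-- The domain shape (Danciger–Stecker) distance. -/
noncomputable def dDS {V : Type*} [NormedAddCommGroup V] [NormedSpace ℝ V]
    (C : Set V) (x y : V) : ℝ :=
  Real.log (ustar C x y / (ustar C x y - 1))

private lemma isLUB_affine {S : Set ℝ} {u₀ s t : ℝ} (ht : 0 < t)
    (h : IsLUB S u₀) : IsLUB {u : ℝ | s + u * t ∈ S} ((u₀ - s) / t) := by
  constructor
  · intro u hu
    have h1 : s + u * t ≤ u₀ := h.1 hu
    rw [le_div_iff₀ ht]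
    linarith
  · intro M hM
    rw [div_le_iff₀ ht]
    have hub : u₀ ≤ s + M * t := by
      apply h.2
      intro v hv
      have hmem : (v - s) / t ∈ {u : ℝ | s + u * t ∈ S} := by
        simp only [Set.mem_setOf_eq, div_mul_cancel₀ _ (ne_of_gt ht)]
        simpa using hv
      have hle : (v - s) / t ≤ M := hM hmem
      rw [div_le_iff₀ ht] at hle
      linarith
    linarith

theorem stmt2 {V : Type*} [NormedAddCommGroup V] [NormedSpace ℝ V] [FiniteDimensional ℝ V]
    (C : Set V) (hne : C.Nonempty) (hopen : IsOpen C) (hconv : Convex ℝ C)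
    (hcone : ∀ t : ℝ, 0 < t → t • C = C)
    (hproper : closure C ∩ -closure C ⊆ {0})
    (x z : V) (hx : x ∈ C) (hz : z ∈ C)
    (hxz : x - z ∉ closure C ∪ -closure C)
    (s : ℝ) (hs0 : 0 < s) (hs1 : s < 1)
    (y : V) (hy : y = (1 - s) • z + s • x) :
    dDS C x y + dDS C y z = dDS C x z := by
  set S : Set ℝ := {u : ℝ | (1 - u) • z + u • x ∈ C} with hS
  have hS1 : (1:ℝ) ∈ S := by
    simp only [hS, Set.mem_setOf_eq, sub_self, zero_smul, one_smul, zero_add]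
    exact hx
  have hSconv : Convex ℝ S := by
    intro u hu v hv a b ha hb hab
    simp only [hS, Set.mem_setOf_eq] at hu hv ⊢
    have h := hconv hu hv ha hb hab
    have key : (1 - (a • u + b • v)) • z + (a • u + b • v) • x
        = a • ((1 - u) • z + u • x) + b • ((1 - v) • z + v • x) := by
      simp only [smul_eq_mul]
      match_scalars
      · linear_combination -hab
      · ring
    rw [key]
    exact h
  have hcont : Continuous (fun u : ℝ => (1 - u) • z + u • x) := by continuity
  have hSopen : IsOpen S := hopen.preimage hcont
  -- S is bounded above
  have hbdd : BddAbove S := by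
    by_contra hb
    have hmemC : ∀ n : ℕ, ((1:ℝ)/(n+1)) • z + (x - z) ∈ C := by
      intro n
      obtain ⟨w, hw, hw'⟩ := not_bddAbove_iff.mp hb ((n:ℝ) + 1)
      have hn1 : ((n:ℝ) + 1) ∈ S := by
        have hIcc : ((n:ℝ) + 1) ∈ Set.Icc (1:ℝ) w := by
          constructor
          · have : (0:ℝ) ≤ (n:ℝ) := Nat.cast_nonneg n; linarith
          · linarith
        exact hSconv.ordConnected.out hS1 hw hIcc
      have hnpos : (0:ℝ) < 1/((n:ℝ)+1) := by positivity
      have hmem2 : ((1:ℝ)/((n:ℝ)+1)) • ((1 - ((n:ℝ)+1)) • z + ((n:ℝ)+1) • x)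
          ∈ ((1:ℝ)/((n:ℝ)+1)) • C := Set.smul_mem_smul_set hn1
      rw [hcone _ hnpos] at hmem2
      have hne0 : ((n:ℝ)+1) ≠ 0 := by positivity
      have hveq : ((1:ℝ)/((n:ℝ)+1)) • ((1 - ((n:ℝ)+1)) • z + ((n:ℝ)+1) • x)
          = ((1:ℝ)/(n+1)) • z + (x - z) := by
        match_scalars
        · field_simp; ring
        · field_simp
      rw [hveq] at hmem2
      exact hmem2
    have htend : Filter.Tendsto (fun n : ℕ => ((1:ℝ)/(n+1)) • z + (x - z))
        Filter.atTop (nhds (x - z)) := by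
      have h0 : Filter.Tendsto (fun n : ℕ => (1:ℝ)/(n+1)) Filter.atTop (nhds 0) :=
        tendsto_one_div_add_atTop_nhds_zero_nat
      have := (h0.smul_const z).add_const (x - z)
      simpa using this
    have : x - z ∈ closure C :=
      mem_closure_of_tendsto htend (Filter.Eventually.of_forall hmemC)
    exact hxz (Set.mem_union_left _ this)
  have hlub : IsLUB S (sSup S) := isLUB_csSup ⟨1, hS1⟩ hbdd
  set u₀ : ℝ := sSup S with hu₀def
  -- u₀ > 1
  have hu₀ : 1 < u₀ := by
    obtain ⟨ε, hε, hball⟩ := Metric.isOpen_iff.mp hSopen 1 hS1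
    have hmemε : (1 + ε/2 : ℝ) ∈ S := by
      apply hball
      rw [Metric.mem_ball, Real.dist_eq]
      rw [show (1 + ε/2 - 1 : ℝ) = ε/2 by ring, abs_of_pos (by linarith)]
      linarith
    have := le_csSup hbdd hmemε
    linarith
  -- y ∈ C, i.e. s ∈ S
  have hsS : s ∈ S := by
    simp only [hS, Set.mem_setOf_eq]
    exact hconv hz hx (by linarith) (le_of_lt hs0) (by ring)
  -- reparametrization identities
  have e1 : {u : ℝ | (1 - u) • y + u • x ∈ C} = {u : ℝ | s + u * (1 - s) ∈ S} := by
    ext u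
    simp only [Set.mem_setOf_eq, hS]
    rw [show (1 - u) • y + u • x
        = (1 - (s + u * (1 - s))) • z + (s + u * (1 - s)) • x by rw [hy]; module]
  have e2 : {u : ℝ | (1 - u) • z + u • y ∈ C} = {u : ℝ | 0 + u * s ∈ S} := by
    ext u
    simp only [Set.mem_setOf_eq, hS]
    rw [show (1 - u) • z + u • y
        = (1 - (0 + u * s)) • z + (0 + u * s) • x by rw [hy]; module]
  have hux : ustar C x z = u₀ := by
    rw [ustar, ← hS]
  have huxy : ustar C x y = (u₀ - s) / (1 - s) := by
    rw [ustar, e1]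
    refine (isLUB_affine (by linarith) hlub).csSup_eq ⟨1, ?_⟩
    simp only [Set.mem_setOf_eq, one_mul]
    rw [show s + (1 - s) = 1 by ring]
    exact hS1
  have huyz : ustar C y z = (u₀ - 0) / s := by
    rw [ustar, e2]
    refine (isLUB_affine hs0 hlub).csSup_eq ⟨1, ?_⟩
    simp only [Set.mem_setOf_eq, one_mul, zero_add]
    exact hsS
  rw [sub_zero] at huyz
  -- final computation
  have hu₀s : 0 < u₀ - s := by linarith
  have hu₀1 : 0 < u₀ - 1 := by linarith
  have h1s : (0:ℝ) < 1 - s := by linarith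
  rw [dDS, dDS, dDS, hux, huxy, huyz]
  have key1 : (u₀ - s)/(1 - s) / ((u₀ - s)/(1 - s) - 1) = (u₀ - s)/(u₀ - 1) := by
    rw [show (u₀ - s)/(1 - s) - 1 = (u₀ - 1)/(1 - s) by field_simp; ring]
    rw [div_div_div_cancel_right₀ (ne_of_gt h1s)]
  have key2 : u₀/s / (u₀/s - 1) = u₀/(u₀ - s) := by
    rw [show u₀/s - 1 = (u₀ - s)/s by field_simp]
    rw [div_div_div_cancel_right₀ (ne_of_gt hs0)]
  rw [key1, key2]
  rw [← Real.log_mul (ne_of_gt (div_pos hu₀s hu₀1)) (ne_of_gt (div_pos (by linarith) hu₀s))]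
  congr 1
  field_simp
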